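/- (Second-order HOCBF invariance, linear class-K functions.) Let h : ℝ → ℝ be twice continuously differentiable, and define Φ₁(t) = ḣ(t) + α₁ h(t) with α₁ > 0. Suppose h(0) ≥ 0, Φ₁(0) ≥ 0, and Φ̇₁(t) + α₂ Φ₁(t) ≥ 0 for all t ≥ 0 with α₂ > 0. Then h(t) ≥ 0 and Φ₁(t) ≥ 0 for all t ≥ 0. -/

import Mathlib

lemma comp_nonneg_aux (f : ℝ → ℝ) (hf : Differentiable ℝ f) (α : ℝ)
    (h0 : 0 ≤ f 0) (hineq : ∀ t, 0 ≤ t → 0 ≤ deriv f t + α * f t) :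
    ∀ t, 0 ≤ t → 0 ≤ f t := by
  intro t ht
  set g : ℝ → ℝ := fun s => Real.exp (α * s) * f s with hg_def
  have hg : ∀ s, HasDerivAt g (Real.exp (α * s) * (deriv f s + α * f s)) s := by
    intro s
    have h1 : HasDerivAt (fun s : ℝ => Real.exp (α * s)) (Real.exp (α * s) * α) s := by
      have := (Real.hasDerivAt_exp (α * s)).comp s
        ((hasDerivAt_id s).const_mul α)
      simpa [mul_comm, Function.comp_def] using this
    have h2 := (hf s).hasDerivAt
    have := h1.mul h2
    refine this.congr_deriv ?_
    ring
  have hgdiff : Differentiable ℝ g := fun s => (hg s).differentiableAt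
  have mono : MonotoneOn g (Set.Ici (0 : ℝ)) := by
    apply monotoneOn_of_deriv_nonneg (convex_Ici 0) hgdiff.continuous.continuousOn
      (fun s hs => (hgdiff s).differentiableWithinAt)
    intro s hs
    rw [interior_Ici] at hs
    rw [(hg s).deriv]
    exact mul_nonneg (Real.exp_pos _).le (hineq s hs.le)
  have key : g 0 ≤ g t := mono (Set.self_mem_Ici) ht ht
  have g0 : g 0 = f 0 := by simp [hg_def]
  have hgt : 0 ≤ g t := by linarith [g0 ▸ key]
  have hgt' : 0 ≤ Real.exp (α * t) * f t := hgt
  have hexp := Real.exp_pos (α * t)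
  nlinarith [hgt', hexp]

theorem stmt_10 (h : ℝ → ℝ) (hC2 : ContDiff ℝ 2 h) (α₁ α₂ : ℝ)
    (hα₁ : 0 < α₁) (hα₂ : 0 < α₂)
    (Φ₁ : ℝ → ℝ) (hΦ₁ : ∀ t, Φ₁ t = deriv h t + α₁ * h t)
    (h0 : 0 ≤ h 0) (hΦ₁0 : 0 ≤ Φ₁ 0)
    (hineq : ∀ t : ℝ, 0 ≤ t → 0 ≤ deriv Φ₁ t + α₂ * Φ₁ t) :
    ∀ t : ℝ, 0 ≤ t → 0 ≤ h t ∧ 0 ≤ Φ₁ t := by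
  have hΦfun : Φ₁ = fun t => deriv h t + α₁ * h t := funext hΦ₁
  have hC2' : ContDiff ℝ ((1 : ℕ∞) + 1) h := by
    exact_mod_cast hC2
  have hderiv : ContDiff ℝ 1 (deriv h) := (contDiff_succ_iff_deriv.mp hC2').2.2
  have hΦdiff : Differentiable ℝ Φ₁ := by
    rw [hΦfun]
    exact (hderiv.differentiable (by norm_num)).add
      ((hC2.differentiable (by norm_num)).const_mul α₁)
  have hΦnonneg : ∀ t, 0 ≤ t → 0 ≤ Φ₁ t :=
    comp_nonneg_aux Φ₁ hΦdiff α₂ hΦ₁0 hineq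
  have hdh : Differentiable ℝ h := hC2.differentiable (by norm_num)
  have hhnonneg : ∀ t, 0 ≤ t → 0 ≤ h t := by
    apply comp_nonneg_aux h hdh α₁ h0
    intro t ht
    have := hΦnonneg t ht
    rw [hΦ₁ t] at this
    linarith
  exact fun t ht => ⟨hhnonneg t ht, hΦnonneg t ht⟩
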